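/- Assume μ satisfies Assumption (A) and that Ω⁻ is nonempty. Let K be a compact subset of Ω⁻. Then there exists a constant c > 0 such that for all sufficiently large n, the probability that K ⊆ Λ_n is at least 1 − e^{−cn}. -/

import Mathlib

open MeasureTheory ProbabilityTheory Filter Metric

/-- Logarithmic potential of a measure on ℂ. -/
noncomputable def logPot (μ : Measure ℂ) (z : ℂ) : ℝ :=
  ∫ w, Real.log (‖z - w‖) ∂μ

/-- Topological support of a measure on ℂ. -/
def msupport (μ : Measure ℂ) : Set ℂ :=
  {x : ℂ | ∀ U ∈ nhds x, 0 < μ U}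

/-- Assumption (A): for every compact `K`, `sup_{z ∈ K} ∫ (log|z-w|)² dμ(w) < ∞`. -/
def AssumptionA (μ : Measure ℂ) : Prop :=
  ∀ K : Set ℂ, IsCompact K → ∃ C : ℝ, ∀ z ∈ K,
    ∫⁻ w, ENNReal.ofReal ((Real.log (‖z - w‖)) ^ 2) ∂μ ≤ ENNReal.ofReal C

/-- Assumption (D): `μ(B(z,r)) ≤ C rᵉ` for all `z` and `r > 0`. -/
def AssumptionD (μ : Measure ℂ) : Prop :=
  ∃ C : ℝ, ∃ ε : ℝ, 0 < ε ∧ ∀ z : ℂ, ∀ r : ℝ, 0 < r →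
    μ (Metric.ball z r) ≤ ENNReal.ofReal (C * r ^ ε)

/-- The filled unit lemniscate of `p_n(z) = ∏_{k<n} (z - X k ω)`. -/
def lemniscate {Ω : Type*} (X : ℕ → Ω → ℂ) (n : ℕ) (ω : Ω) : Set ℂ :=
  {z : ℂ | ‖∏ k ∈ Finset.range n, (z - X k ω)‖ < 1}

/-- Inradius of a planar set: the sup of radii of open disks contained in it (0 if none). -/
noncomputable def inradius (U : Set ℂ) : ℝ :=
  sSup {r : ℝ | 0 < r ∧ ∃ c : ℂ, Metric.ball c r ⊆ U}

set_option maxHeartbeats 1000000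
open scoped ENNReal

lemma msupport_compl_null (μ : Measure ℂ) : μ (msupport μ)ᶜ = 0 := by
  have h : ∀ x : ℂ, x ∈ (msupport μ)ᶜ → ∃ V : Set ℂ, IsOpen V ∧ x ∈ V ∧ μ V = 0 := by
    intro x hx
    simp only [Set.mem_compl_iff, msupport, Set.mem_setOf_eq, not_forall] at hx
    obtain ⟨U, hU, hUx⟩ := hx
    obtain ⟨V, hVU, hVopen, hxV⟩ := _root_.mem_nhds_iff.mp hU
    exact ⟨V, hVopen, hxV,
      le_antisymm ((measure_mono hVU).trans (not_lt.mp hUx)) (by positivity)⟩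
  choose! V hVopen hxV hV0 using h
  have hcover : (msupport μ)ᶜ ⊆ ⋃ x : {y : ℂ // y ∈ (msupport μ)ᶜ}, V (x : ℂ) := fun x hx =>
    Set.mem_iUnion.mpr ⟨⟨x, hx⟩, hxV x hx⟩
  obtain ⟨T, hTc, hTU⟩ := TopologicalSpace.isOpen_iUnion_countable
    (fun x : {y : ℂ // y ∈ (msupport μ)ᶜ} => V (x : ℂ)) (fun x => hVopen x x.2)
  have h0 : μ (⋃ i ∈ T, V (i : ℂ)) = 0 :=
    (measure_biUnion_null_iff hTc).mpr fun x _ => hV0 x x.2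
  rw [hTU] at h0
  exact measure_mono_null hcover h0


lemma logd_continuous (z : ℂ) {δ : ℝ} (hδ : 0 < δ) :
    Continuous (fun w : ℂ => Real.log (‖z - w‖ + δ)) := by
  refine Continuous.log ?_ ?_
  · exact (continuous_norm.comp (continuous_const.sub continuous_id)).add continuous_const
  · intro w
    have : 0 ≤ ‖z - w‖ := norm_nonneg _
    positivity


lemma logabs_measurable (z : ℂ) :
    Measurable (fun w : ℂ => Real.log (‖z - w‖)) :=
  Real.measurable_log.comp
    (continuous_norm.comp (continuous_const.sub continuous_id)).measurable


/-- For `u` with `|u| ≤ 1`, `exp u ≤ 1 + u + (3/4) u²`. -/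
lemma exp_quad_bound {u : ℝ} (hu : |u| ≤ 1) :
    Real.exp u ≤ 1 + u + (3/4) * u ^ 2 := by
  have h := Real.exp_bound hu (n := 2) (by norm_num)
  have h2 : ∑ m ∈ Finset.range 2, u ^ m / m.factorial = 1 + u := by
    simp [Finset.sum_range_succ]
  rw [h2] at h
  rw [sq_abs] at h
  norm_num [Nat.factorial] at h
  have := (abs_sub_le_iff.mp h).1
  linarith


/-- Key per-center lemma: a strictly-sub-1 bound for the smoothed mgf at level μ. -/
lemma center_bound (μ : Measure ℂ) [IsProbabilityMeasure μ] (z₀ : ℂ) (M C : ℝ)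
    (hM : 1 ≤ M) (hC : 0 ≤ C)
    (hae : ∀ᵐ w ∂μ, ‖z₀ - w‖ ≤ M)
    (hCint : ∫⁻ w, ENNReal.ofReal ((Real.log (‖z₀ - w‖)) ^ 2) ∂μ ≤ ENNReal.ofReal C)
    (hm : logPot μ z₀ < 0) :
    ∃ δ : ℝ, 0 < δ ∧ δ ≤ 1 ∧ ∃ t : ℝ, 0 < t ∧ ∃ q : ℝ, 0 ≤ q ∧ q < 1 ∧
      ∫ w, Real.exp (t * Real.log (‖z₀ - w‖ + δ)) ∂μ ≤ q := by
  set L : ℂ → ℝ := fun w => Real.log (‖z₀ - w‖) with hL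
  have hLmeas : Measurable L := logabs_measurable z₀
  have hL2meas : Measurable (fun w => L w ^ 2) := hLmeas.pow_const 2
  -- integrability of L^2 and L
  have hL2int : Integrable (fun w => L w ^ 2) μ := by
    refine ⟨hL2meas.aestronglyMeasurable, ?_⟩
    rw [hasFiniteIntegral_iff_ofReal (Eventually.of_forall fun w => sq_nonneg _)]
    exact lt_of_le_of_lt hCint ENNReal.ofReal_lt_top
  have hL2le : ∫ w, L w ^ 2 ∂μ ≤ C := by
    rw [integral_eq_lintegral_of_nonneg_ae (Eventually.of_forall fun w => sq_nonneg _)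
      hL2meas.aestronglyMeasurable]
    calc (∫⁻ w, ENNReal.ofReal (L w ^ 2) ∂μ).toReal
        ≤ (ENNReal.ofReal C).toReal := ENNReal.toReal_mono ENNReal.ofReal_ne_top hCint
      _ = C := ENNReal.toReal_ofReal hC
  have hLint : Integrable L μ := by
    refine Integrable.mono' (hL2int.add (integrable_const 1)) hLmeas.aestronglyMeasurable
      (Eventually.of_forall fun w => ?_)
    simp only [Pi.add_apply, Real.norm_eq_abs]
    nlinarith [sq_nonneg (|L w| - 1), sq_abs (L w)]
  set m₀ : ℝ := logPot μ z₀ with hm₀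
  have hm₀L : m₀ = ∫ w, L w ∂μ := rfl
  -- choice of A and ε
  set A : ℝ := (4 * C + 1) / (-m₀) with hA
  have hA0 : 0 < A := div_pos (by linarith) (by linarith)
  have hCA : C / A ≤ -m₀ / 4 := by
    rw [div_le_div_iff₀ hA0 (by norm_num)]
    have hAm : A * (-m₀) = 4 * C + 1 := div_mul_cancel₀ _ (by linarith)
    nlinarith
  set ε : ℝ := min (Real.exp (-A)) (1/2) with hε
  have hε0 : 0 < ε := lt_min (Real.exp_pos _) (by norm_num)
  have hε1 : ε ≤ 1/2 := min_le_right _ _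
  have hεA : ε ≤ Real.exp (-A) := min_le_left _ _
  set s : Set ℂ := {w | ‖z₀ - w‖ < ε} with hsdef
  have hs : MeasurableSet s :=
    measurableSet_lt (continuous_norm.comp (continuous_const.sub continuous_id)).measurable
      measurable_const
  -- lower bound for ∫_s L
  have hIs : m₀ / 4 ≤ ∫ w in s, L w ∂μ := by
    have hpt : ∀ w ∈ s, -L w ≤ L w ^ 2 / A := by
      intro w hw
      rcases eq_or_lt_of_le (norm_nonneg (z₀ - w)) with h0 | h0
      · simp [hL, ← h0, Real.log_zero]
      · have hlt : ‖z₀ - w‖ < Real.exp (-A) := lt_of_lt_of_le hw hεA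
        have hlog : L w < -A := by
          have := Real.log_lt_log h0 hlt
          rwa [Real.log_exp] at this
        rw [le_div_iff₀ hA0]
        nlinarith
    have h1 : ∫ w in s, -L w ∂μ ≤ ∫ w in s, L w ^ 2 / A ∂μ :=
      setIntegral_mono_on hLint.neg.integrableOn (hL2int.div_const A).integrableOn hs hpt
    have h2 : ∫ w in s, L w ^ 2 / A ∂μ ≤ ∫ w, L w ^ 2 / A ∂μ :=
      setIntegral_le_integral (hL2int.div_const A)
        (Eventually.of_forall fun w => by positivity)
    have h3 : ∫ w, L w ^ 2 / A ∂μ = (∫ w, L w ^ 2 ∂μ) / A := integral_div A _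
    have h4 : (∫ w, L w ^ 2 ∂μ) / A ≤ C / A := by gcongr
    rw [integral_neg] at h1
    have := h1.trans (h2.trans (h3.le.trans h4))
    linarith [hCA, this]
  -- upper bound for ∫_{sᶜ} L
  have hIc : ∫ w in sᶜ, L w ∂μ ≤ (3/4) * m₀ := by
    have hsplit : (∫ w in s, L w ∂μ) + ∫ w in sᶜ, L w ∂μ = ∫ w, L w ∂μ :=
      integral_add_compl hs hLint
    rw [← hm₀L] at hsplit
    linarith
  -- choice of δ
  set δ : ℝ := min (ε * (-m₀) / 8) (1/2) with hδdef
  have hδ0 : 0 < δ := lt_min (div_pos (mul_pos hε0 (by linarith)) (by norm_num)) (by norm_num)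
  have hδhalf : δ ≤ 1/2 := min_le_right _ _
  have hδε : δ / ε ≤ -m₀ / 8 := by
    rw [div_le_iff₀ hε0]
    have := min_le_left (ε * (-m₀) / 8) (1/2)
    calc δ ≤ ε * (-m₀) / 8 := this
      _ = -m₀ / 8 * ε := by ring
  clear_value A ε δ
  set Lδ : ℂ → ℝ := fun w => Real.log (‖z₀ - w‖ + δ) with hLδ
  have hLδcont : Continuous Lδ := logd_continuous z₀ hδ0
  have hLδmeas : Measurable Lδ := hLδcont.measurable
  have hub : ∀ᵐ w ∂μ, Lδ w ≤ Real.log (M + 1) := by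
    filter_upwards [hae] with w hw
    apply Real.log_le_log (by positivity)
    linarith
  have hlb : ∀ w, Real.log δ ≤ Lδ w := by
    intro w
    apply Real.log_le_log hδ0
    have := norm_nonneg (z₀ - w)
    linarith
  set B : ℝ := |Real.log δ| + Real.log (M + 1) + 1 with hB
  have hlogM : 0 ≤ Real.log (M + 1) := Real.log_nonneg (by linarith)
  have hB1 : 1 ≤ B := by
    have := abs_nonneg (Real.log δ)
    linarith
  have hB0 : 0 < B := by linarith
  have habs : ∀ᵐ w ∂μ, |Lδ w| ≤ B := by
    filter_upwards [hub] with w hw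
    rw [abs_le]
    constructor
    · have h1 := hlb w
      have h2 := neg_abs_le (Real.log δ)
      simp only [hB]
      linarith
    · simp only [hB]
      linarith [abs_nonneg (Real.log δ)]
  have hLδint : Integrable Lδ μ :=
    Integrable.mono' (integrable_const B) hLδmeas.aestronglyMeasurable
      (by filter_upwards [habs] with w hw; rwa [Real.norm_eq_abs])
  set m₁ : ℝ := ∫ w, Lδ w ∂μ with hm₁
  -- m₁ ≤ (5/8) m₀
  have hm₁le : m₁ ≤ (5/8) * m₀ := by
    have hsplit : (∫ w in s, Lδ w ∂μ) + ∫ w in sᶜ, Lδ w ∂μ = m₁ :=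
      integral_add_compl hs hLδint
    have hs0 : ∫ w in s, Lδ w ∂μ ≤ 0 := by
      apply setIntegral_nonpos hs
      intro w hw
      have hw' : ‖z₀ - w‖ < ε := hw
      have : ‖z₀ - w‖ + δ ≤ 1 := by linarith [hε1, hδhalf]
      calc Lδ w ≤ Real.log 1 := Real.log_le_log (by positivity) this
        _ = 0 := Real.log_one
    have hsc : ∫ w in sᶜ, Lδ w ∂μ ≤ (3/4) * m₀ + δ / ε := by
      have hmono : ∫ w in sᶜ, Lδ w ∂μ ≤ ∫ w in sᶜ, (L w + δ / ε) ∂μ := by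
        refine setIntegral_mono_on hLδint.integrableOn
          ((hLint.add (integrable_const (δ / ε))).integrableOn) hs.compl ?_
        intro w hw
        have hx : ε ≤ ‖z₀ - w‖ := not_lt.mp hw
        have hx0 : 0 < ‖z₀ - w‖ := lt_of_lt_of_le hε0 hx
        set x : ℝ := ‖z₀ - w‖
        have hfact : x + δ = x * (1 + δ / x) := by field_simp
        have hlog2 : Real.log (1 + δ / x) ≤ δ / x := by
          have := Real.log_le_sub_one_of_pos (show (0:ℝ) < 1 + δ / x by positivity)
          linarith
        have hdd : δ / x ≤ δ / ε := div_le_div_of_nonneg_left hδ0.le hε0 hx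
        calc Lδ w = Real.log (x * (1 + δ / x)) := by rw [← hfact]
          _ = Real.log x + Real.log (1 + δ / x) :=
              Real.log_mul (ne_of_gt hx0) (by positivity)
          _ ≤ L w + δ / ε := by exact add_le_add le_rfl (hlog2.trans hdd)
      have hconst : ∫ w in sᶜ, (L w + δ / ε) ∂μ
          = (∫ w in sᶜ, L w ∂μ) + (μ sᶜ).toReal * (δ / ε) := by
        rw [integral_add hLint.integrableOn (integrable_const _)]
        simp [setIntegral_const, smul_eq_mul, measureReal_def]
      have hμ1 : (μ sᶜ).toReal ≤ 1 := by
        simpa using ENNReal.toReal_mono ENNReal.one_ne_top (prob_le_one (μ := μ) (s := sᶜ))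
      have hnn : 0 ≤ δ / ε := by positivity
      have : (μ sᶜ).toReal * (δ / ε) ≤ δ / ε := by
        nlinarith
      rw [hconst] at hmono
      linarith [hIc]
    have hδεm : δ / ε ≤ -m₀ / 8 := hδε
    linarith
  have hm₁neg : m₁ < 0 := lt_of_le_of_lt hm₁le (by linarith)
  have hm₁B : -B ≤ m₁ := by
    have : ∫ w, (-B : ℝ) ∂μ ≤ ∫ w, Lδ w ∂μ := by
      refine integral_mono_ae (integrable_const _) hLδint ?_
      filter_upwards [habs] with w hw
      linarith [abs_le.mp hw]
    simpa using this
  -- choice of t and q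
  clear_value B m₁
  set t : ℝ := min (1 / B) (-m₁ / (2 * B ^ 2)) with ht
  have ht0 : 0 < t := lt_min (by positivity) (div_pos (by linarith) (by positivity))
  have htB : t * B ≤ 1 := by
    have h := min_le_left (1 / B) (-m₁ / (2 * B ^ 2))
    calc t * B ≤ (1 / B) * B := by nlinarith
      _ = 1 := by field_simp
  have htm : t * (2 * B ^ 2) ≤ -m₁ := by
    have h := min_le_right (1 / B) (-m₁ / (2 * B ^ 2))
    rw [← le_div_iff₀ (by positivity)]
    exact h
  clear_value t
  set q : ℝ := 1 + t * m₁ + (3/4) * t ^ 2 * B ^ 2 with hq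
  clear_value q
  have hq1 : q < 1 := by
    rw [hq]
    nlinarith [mul_le_mul_of_nonneg_left htm ht0.le,
      mul_pos ht0 (show (0:ℝ) < -m₁ by linarith)]
  have hq0 : 0 ≤ q := by
    rw [hq]
    nlinarith [mul_le_mul_of_nonneg_left hm₁B ht0.le, htB, sq_nonneg (t * B)]
  refine ⟨δ, hδ0, by linarith, t, ht0, q, hq0, hq1, ?_⟩
  have hptq : ∀ᵐ w ∂μ, Real.exp (t * Lδ w) ≤ 1 + t * Lδ w + (3/4) * t ^ 2 * B ^ 2 := by
    filter_upwards [habs] with w hw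
    have h1 : |t * Lδ w| ≤ 1 := by
      rw [abs_mul, abs_of_pos ht0]
      calc t * |Lδ w| ≤ t * B := by nlinarith
        _ ≤ 1 := htB
    have h2 := exp_quad_bound h1
    have h3 : (t * Lδ w) ^ 2 ≤ t ^ 2 * B ^ 2 := by
      have : Lδ w ^ 2 ≤ B ^ 2 := sq_le_sq' (by linarith [abs_le.mp hw]) (abs_le.mp hw).2
      calc (t * Lδ w) ^ 2 = t ^ 2 * Lδ w ^ 2 := by ring
        _ ≤ t ^ 2 * B ^ 2 := by nlinarith [sq_nonneg t]
    nlinarith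
  have hexpint : Integrable (fun w => Real.exp (t * Lδ w)) μ := by
    refine Integrable.mono' (integrable_const (Real.exp (t * B)))
      ((Real.measurable_exp.comp (hLδmeas.const_mul t)).aestronglyMeasurable) ?_
    filter_upwards [habs] with w hw
    rw [Real.norm_eq_abs, abs_of_pos (Real.exp_pos _)]
    apply Real.exp_le_exp.mpr
    nlinarith [abs_le.mp hw]
  have hRint : Integrable (fun w => 1 + t * Lδ w + (3/4) * t ^ 2 * B ^ 2) μ :=
    ((integrable_const 1).add (hLδint.const_mul t)).add (integrable_const _)
  calc ∫ w, Real.exp (t * Lδ w) ∂μ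
      ≤ ∫ w, (1 + t * Lδ w + (3/4) * t ^ 2 * B ^ 2) ∂μ :=
        integral_mono_ae hexpint hRint hptq
    _ = 1 + t * m₁ + (3/4) * t ^ 2 * B ^ 2 := by
        have i1 : Integrable (fun w => 1 + t * Lδ w) μ :=
          (integrable_const 1).add (hLδint.const_mul t)
        have i0 : Integrable (fun w => t * Lδ w) μ := hLδint.const_mul t
        rw [integral_add i1 (integrable_const _), integral_add (integrable_const 1) i0,
          integral_const_mul, integral_const, integral_const]
        simp [← hm₁]
    _ = q := hq.symm


/-- Chernoff step: bound the probability that the smoothed log-product is ≥ 0. -/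
lemma chernoff_step {Ω : Type*} [MeasurableSpace Ω] (P : Measure Ω) [IsProbabilityMeasure P]
    (μ : Measure ℂ) [IsProbabilityMeasure μ]
    (X : ℕ → Ω → ℂ) (hmeas : ∀ i, Measurable (X i))
    (hid : ∀ i, Measure.map (X i) P = μ)
    (hindep : iIndepFun X P)
    (z₀ : ℂ) (δ t q M : ℝ) (hδ : 0 < δ) (ht : 0 < t) (hq0 : 0 ≤ q)
    (hbound : ∀ᵐ w ∂μ, ‖z₀ - w‖ ≤ M)
    (hmgf : ∫ w, Real.exp (t * Real.log (‖z₀ - w‖ + δ)) ∂μ ≤ q)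
    (n : ℕ) :
    P {ω | (0:ℝ) ≤ ∑ k ∈ Finset.range n, Real.log (‖z₀ - X k ω‖ + δ)} ≤
      ENNReal.ofReal (q ^ n) := by
  set g : ℂ → ℝ := fun x => Real.log (‖z₀ - x‖ + δ) with hg
  have hgmeas : Measurable g := (logd_continuous z₀ hδ).measurable
  set Y : ℕ → Ω → ℝ := fun k => g ∘ X k with hY
  have hYmeas : ∀ k, Measurable (Y k) := fun k => hgmeas.comp (hmeas k)
  have hYindep : iIndepFun Y P :=
    hindep.comp (fun _ => g) (fun _ => hgmeas)
  set M₁ : ℝ := max M 0 with hM₁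
  -- a.e. bound on each coordinate
  have hXb : ∀ k, ∀ᵐ ω ∂P, ‖z₀ - X k ω‖ ≤ M := by
    intro k
    have hsetm : MeasurableSet {w : ℂ | ‖z₀ - w‖ ≤ M} :=
      measurableSet_le
        (continuous_norm.comp (continuous_const.sub continuous_id)).measurable
        measurable_const
    have := hbound
    rw [← hid k] at this
    exact (ae_map_iff (hmeas k).aemeasurable hsetm).mp this
  have hYb : ∀ k, ∀ᵐ ω ∂P, Y k ω ≤ Real.log (M₁ + δ) := by
    intro k
    filter_upwards [hXb k] with ω hω
    refine Real.log_le_log (by positivity) ?_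
    have : ‖z₀ - X k ω‖ ≤ M₁ := hω.trans (le_max_left _ _)
    linarith
  -- mgf of each Y k equals the μ-integral
  have hmgfY : ∀ k, mgf (Y k) P t ≤ q := by
    intro k
    have hmap : ∫ w, Real.exp (t * g w) ∂(Measure.map (X k) P)
        = ∫ ω, Real.exp (t * g (X k ω)) ∂P :=
      integral_map (hmeas k).aemeasurable
        ((Real.measurable_exp.comp (hgmeas.const_mul t)).aestronglyMeasurable)
    rw [hid k] at hmap
    have heq : mgf (Y k) P t = ∫ w, Real.exp (t * g w) ∂μ := by
      rw [mgf]
      simp only [hY, Function.comp_apply]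
      exact hmap.symm
    rw [heq]
    exact hmgf
  --整 sum
  set Z : Ω → ℝ := ∑ k ∈ Finset.range n, Y k with hZ
  have hZapp : ∀ ω, Z ω = ∑ k ∈ Finset.range n, Y k ω := by
    intro ω; rw [hZ]; simp [Finset.sum_apply]
  have hallb : ∀ᵐ ω ∂P, ∀ k, Y k ω ≤ Real.log (M₁ + δ) := (ae_all_iff).mpr hYb
  have hZmeas : Measurable Z := by
    have h : Measurable (fun ω => ∑ k ∈ Finset.range n, Y k ω) :=
      Finset.measurable_sum _ fun k _ => hYmeas k
    have h2 : Z = fun ω => ∑ k ∈ Finset.range n, Y k ω := funext hZapp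
    rw [h2]
    exact h
  have hZint : Integrable (fun ω => Real.exp (t * Z ω)) P := by
    refine Integrable.mono' (integrable_const (Real.exp (t * (n * Real.log (M₁ + δ)))))
      ((Real.measurable_exp.comp (hZmeas.const_mul t)).aestronglyMeasurable) ?_
    filter_upwards [hallb] with ω hω
    rw [Real.norm_eq_abs, abs_of_pos (Real.exp_pos _)]
    apply Real.exp_le_exp.mpr
    have hsum : Z ω ≤ n * Real.log (M₁ + δ) := by
      rw [hZapp]
      calc ∑ k ∈ Finset.range n, Y k ω ≤ ∑ _k ∈ Finset.range n, Real.log (M₁ + δ) :=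
            Finset.sum_le_sum fun k _ => hω k
        _ = n * Real.log (M₁ + δ) := by simp [Finset.sum_const, mul_comm]
    nlinarith
  have hch := measure_ge_le_exp_mul_mgf (μ := P) (X := Z) 0 ht.le hZint
  have hprod : mgf Z P t = ∏ k ∈ Finset.range n, mgf (Y k) P t :=
    hYindep.mgf_sum hYmeas _
  have hle : mgf Z P t ≤ q ^ n := by
    rw [hprod]
    calc ∏ k ∈ Finset.range n, mgf (Y k) P t ≤ ∏ _k ∈ Finset.range n, q :=
          Finset.prod_le_prod (fun k _ => mgf_nonneg) (fun k _ => hmgfY k)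
      _ = q ^ n := by simp
  have htoReal : (P {ω | (0:ℝ) ≤ Z ω}).toReal ≤ q ^ n := by
    calc (P {ω | (0:ℝ) ≤ Z ω}).toReal ≤ Real.exp (-t * 0) * mgf Z P t := hch
      _ = mgf Z P t := by simp
      _ ≤ q ^ n := hle
  have hfin : P {ω | (0:ℝ) ≤ Z ω} ≠ ⊤ := measure_ne_top _ _
  have : P {ω | (0:ℝ) ≤ Z ω} ≤ ENNReal.ofReal (q ^ n) := by
    rw [← ENNReal.ofReal_toReal hfin]
    exact ENNReal.ofReal_le_ofReal htoReal
  have hset : {ω | (0:ℝ) ≤ ∑ k ∈ Finset.range n, Real.log (‖z₀ - X k ω‖ + δ)}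
      = {ω | (0:ℝ) ≤ Z ω} := by
    ext ω
    simp only [Set.mem_setOf_eq, hZapp, hY, Function.comp_apply, hg]
  rw [hset]
  exact this


theorem statement0
    {Ω : Type*} [MeasurableSpace Ω] (P : Measure Ω) [IsProbabilityMeasure P]
    (μ : Measure ℂ) [IsProbabilityMeasure μ] (hS : IsCompact (msupport μ))
    (hA : AssumptionA μ)
    (X : ℕ → Ω → ℂ) (hmeas : ∀ i, Measurable (X i))
    (hid : ∀ i, Measure.map (X i) P = μ)
    (hindep : iIndepFun X P)
    (hneg : Set.Nonempty {z : ℂ | logPot μ z < 0})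
    (K : Set ℂ) (hK : IsCompact K) (hKsub : K ⊆ {z : ℂ | logPot μ z < 0}) :
    ∃ c > (0 : ℝ), ∀ᶠ n : ℕ in atTop,
      1 - ENNReal.ofReal (Real.exp (-c * n)) ≤ P {ω | K ⊆ lemniscate X n ω} := by
  rcases K.eq_empty_or_nonempty with hKe | hKne
  · refine ⟨1, one_pos, Eventually.of_forall fun n => ?_⟩
    have : {ω | K ⊆ lemniscate X n ω} = Set.univ := by
      ext ω; simp [hKe, Set.empty_subset]
    rw [this, measure_univ]
    exact tsub_le_self
  -- radii bounds
  obtain ⟨R₁, hR₁⟩ := hS.isBounded.subset_closedBall (0 : ℂ)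
  obtain ⟨R₂, hR₂⟩ := hK.isBounded.subset_closedBall (0 : ℂ)
  set M : ℝ := max (R₁ + R₂) 1 with hM
  have hM1 : 1 ≤ M := le_max_right _ _
  obtain ⟨C₀, hC₀⟩ := hA K hK
  set C : ℝ := max C₀ 0 with hC
  have hC0 : 0 ≤ C := le_max_right _ _
  have hCK : ∀ z ∈ K,
      ∫⁻ w, ENNReal.ofReal ((Real.log (‖z - w‖)) ^ 2) ∂μ ≤ ENNReal.ofReal C :=
    fun z hz => (hC₀ z hz).trans (ENNReal.ofReal_le_ofReal (le_max_left _ _))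
  -- a.e. bound on distances
  have hsupp : ∀ᵐ w ∂μ, w ∈ msupport μ := by
    rw [ae_iff]
    exact msupport_compl_null μ
  have haeK : ∀ z ∈ K, ∀ᵐ w ∂μ, ‖z - w‖ ≤ M := by
    intro z hz
    filter_upwards [hsupp] with w hw
    have h1 : dist z (0:ℂ) ≤ R₂ := mem_closedBall.mp (hR₂ hz)
    have h2 : dist w (0:ℂ) ≤ R₁ := mem_closedBall.mp (hR₁ hw)
    have : ‖z - w‖ = dist z w := (Complex.dist_eq z w).symm
    rw [this]
    calc dist z w ≤ dist z 0 + dist (0:ℂ) w := dist_triangle _ _ _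
      _ = dist z 0 + dist w 0 := by rw [dist_comm (0:ℂ) w]
      _ ≤ R₂ + R₁ := add_le_add h1 h2
      _ ≤ M := by rw [hM]; apply le_max_left _ _ |>.trans' ; linarith
  -- per-center data
  have hchoice : ∀ z : ℂ, z ∈ K → ∃ δ : ℝ, 0 < δ ∧ δ ≤ 1 ∧ ∃ t : ℝ, 0 < t ∧
      ∃ q : ℝ, 0 ≤ q ∧ q < 1 ∧
      ∫ w, Real.exp (t * Real.log (‖z - w‖ + δ)) ∂μ ≤ q := by
    intro z hz
    exact center_bound μ z M C hM1 hC0 (haeK z hz) (hCK z hz) (hKsub hz)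
  choose! δf hδ0 hδ1 tf ht0 qf hq0 hq1 hqint using hchoice
  -- finite subcover
  have hcover : K ⊆ ⋃ z : {z : ℂ // z ∈ K}, ball (z : ℂ) (δf z) := by
    intro z hz
    exact Set.mem_iUnion.mpr ⟨⟨z, hz⟩, mem_ball_self (hδ0 z hz)⟩
  obtain ⟨I, hI⟩ := hK.elim_finite_subcover
    (fun z : {z : ℂ // z ∈ K} => ball (z : ℂ) (δf z)) (fun _ => isOpen_ball) hcover
  have hInON : I.Nonempty := by
    obtain ⟨z, hz⟩ := hKne
    obtain ⟨i, hiI, _⟩ := Set.mem_iUnion₂.mp (hI hz)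
    exact ⟨i, hiI⟩
  -- maximum q
  set q' : ℝ := I.sup' hInON (fun i => qf (i : ℂ)) with hq'
  set qq : ℝ := max q' (1/2) with hqq
  have hqq0 : 0 < qq := lt_of_lt_of_le (by norm_num) (le_max_right _ _)
  have hqq1 : qq < 1 := by
    apply max_lt ?_ (by norm_num)
    rw [hq', Finset.sup'_lt_iff]
    exact fun i hi => hq1 (i : ℂ) i.2
  have hqqle : ∀ i ∈ I, qf (i : ℂ) ≤ qq := by
    intro i hi
    have h1 : qf (i : ℂ) ≤ q' := Finset.le_sup' (fun j : {z : ℂ // z ∈ K} => qf (j : ℂ)) hi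
    exact h1.trans (le_max_left _ _)
  set c : ℝ := -Real.log qq / 2 with hc
  have hlogqq : Real.log qq < 0 := Real.log_neg hqq0 hqq1
  have hc0 : 0 < c := by rw [hc]; linarith
  refine ⟨c, hc0, ?_⟩
  -- eventual bound
  have htend : Tendsto (fun n : ℕ => Real.exp (c * n)) atTop atTop :=
    Real.tendsto_exp_atTop.comp (Tendsto.const_mul_atTop hc0 tendsto_natCast_atTop_atTop)
  filter_upwards [htend.eventually_ge_atTop (I.card : ℝ)] with n hn
  -- union bound on the bad event
  set E : Set Ω := {ω | K ⊆ lemniscate X n ω} with hE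
  have hcompl : Eᶜ ⊆ ⋃ i ∈ I,
      {ω | (0:ℝ) ≤ ∑ k ∈ Finset.range n, Real.log (‖(i : ℂ) - X k ω‖ + δf i)} := by
    intro ω hω
    have : ¬ K ⊆ lemniscate X n ω := hω
    obtain ⟨z, hzK, hzout⟩ := Set.not_subset.mp this
    have hz1 : (1:ℝ) ≤ ‖∏ k ∈ Finset.range n, (z - X k ω)‖ := not_lt.mp hzout
    obtain ⟨i, hiI, hzi⟩ := Set.mem_iUnion₂.mp (hI hzK)
    refine Set.mem_biUnion hiI ?_
    have hprod1 : (1:ℝ) ≤ ∏ k ∈ Finset.range n, ‖z - X k ω‖ := by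
      rwa [← norm_prod]
    have hprod2 : ∏ k ∈ Finset.range n, ‖z - X k ω‖
        ≤ ∏ k ∈ Finset.range n, (‖(i : ℂ) - X k ω‖ + δf i) := by
      refine Finset.prod_le_prod (fun k _ => norm_nonneg _) (fun k _ => ?_)
      have h1 : ‖z - X k ω‖
          ≤ ‖z - (i : ℂ)‖ + ‖(i : ℂ) - X k ω‖ := by
        have := norm_add_le (z - (i : ℂ)) ((i : ℂ) - X k ω)
        simpa using this
      have h2 : ‖z - (i : ℂ)‖ < δf i := by
        rw [← Complex.dist_eq]
        exact mem_ball.mp hzi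
      linarith
    have hlogsum : Real.log (∏ k ∈ Finset.range n, (‖(i : ℂ) - X k ω‖ + δf i))
        = ∑ k ∈ Finset.range n, Real.log (‖(i : ℂ) - X k ω‖ + δf i) := by
      refine Real.log_prod (fun k _ => ?_)
      have := norm_nonneg ((i : ℂ) - X k ω)
      have := hδ0 (i : ℂ) i.2
      positivity
    have : (0:ℝ) ≤ Real.log (∏ k ∈ Finset.range n, (‖(i : ℂ) - X k ω‖ + δf i)) :=
      Real.log_nonneg (hprod1.trans hprod2)
    rw [hlogsum] at this
    exact this
  have hunion : P Eᶜ ≤ ∑ i ∈ I, ENNReal.ofReal (qq ^ n) := by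
    calc P Eᶜ ≤ P (⋃ i ∈ I,
        {ω | (0:ℝ) ≤ ∑ k ∈ Finset.range n, Real.log (‖(i : ℂ) - X k ω‖ + δf i)}) :=
          measure_mono hcompl
      _ ≤ ∑ i ∈ I, P {ω | (0:ℝ) ≤ ∑ k ∈ Finset.range n,
            Real.log (‖(i : ℂ) - X k ω‖ + δf i)} := measure_biUnion_finset_le _ _
      _ ≤ ∑ i ∈ I, ENNReal.ofReal (qq ^ n) := by
          refine Finset.sum_le_sum fun i hi => ?_
          have hstep := chernoff_step P μ X hmeas hid hindep (i : ℂ) (δf i) (tf i) (qf i) M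
            (hδ0 (i : ℂ) i.2) (ht0 (i : ℂ) i.2) (hq0 (i : ℂ) i.2) (haeK (i : ℂ) i.2)
            (hqint (i : ℂ) i.2) n
          refine hstep.trans (ENNReal.ofReal_le_ofReal ?_)
          exact pow_le_pow_left₀ (hq0 (i : ℂ) i.2) (hqqle i hi) n
  have hcard : P Eᶜ ≤ ENNReal.ofReal (Real.exp (-c * n)) := by
    have h1 : ∑ i ∈ I, ENNReal.ofReal (qq ^ n) = (I.card : ℝ≥0∞) * ENNReal.ofReal (qq ^ n) := by
      rw [Finset.sum_const, nsmul_eq_mul]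
    have h2 : (I.card : ℝ≥0∞) * ENNReal.ofReal (qq ^ n)
        = ENNReal.ofReal ((I.card : ℝ) * qq ^ n) := by
      rw [ENNReal.ofReal_mul (by positivity)]
      congr 1
      simp [ENNReal.ofReal_natCast]
    have h3 : (I.card : ℝ) * qq ^ n ≤ Real.exp (-c * n) := by
      have hqqexp : qq ^ n = Real.exp ((n : ℝ) * Real.log qq) := by
        rw [Real.exp_nat_mul, Real.exp_log hqq0]
      have hlogc : Real.log qq = -2 * c := by rw [hc]; ring
      calc (I.card : ℝ) * qq ^ n ≤ Real.exp (c * n) * qq ^ n := by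
            apply mul_le_mul_of_nonneg_right hn (by positivity)
        _ = Real.exp (c * n) * Real.exp ((n : ℝ) * (-2 * c)) := by
            rw [hqqexp, hlogc]
        _ = Real.exp (-c * n) := by rw [← Real.exp_add]; ring_nf
      
    calc P Eᶜ ≤ ∑ i ∈ I, ENNReal.ofReal (qq ^ n) := hunion
      _ = ENNReal.ofReal ((I.card : ℝ) * qq ^ n) := by rw [h1, h2]
      _ ≤ ENNReal.ofReal (Real.exp (-c * n)) := ENNReal.ofReal_le_ofReal h3
  -- conclude
  have h1 : (1 : ℝ≥0∞) ≤ P E + P Eᶜ := by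
    calc (1 : ℝ≥0∞) = P Set.univ := (measure_univ).symm
      _ = P (E ∪ Eᶜ) := by rw [Set.union_compl_self]
      _ ≤ P E + P Eᶜ := measure_union_le _ _
  rw [tsub_le_iff_right]
  calc (1 : ℝ≥0∞) ≤ P E + P Eᶜ := h1
    _ ≤ P E + ENNReal.ofReal (Real.exp (-c * n)) := add_le_add le_rfl hcard
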